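/- Fix integers N ≥ 2 and i ∈ {1,…,N}, vectors π, β ∈ [0,1]^N and b ∈ ℝ^N. With r^j := 1 + ((N−1)/N)·π^j, a^{i,j} := (π^j + β^j π^i/(N r^i))/(r^j + β^j/N) for j ≠ i, and A := [(1/N)·Σ_{j≠i} a^{i,j}·(b^j + (π^i/(N r^i))·b^i)]/(1 − (1/N)·Σ_{j≠i} a^{i,j}), one has |A| ≤ (2/N)·Σ_{j=1}^N |b^j|. -/

import Mathlib

open Finset

/-- Growth estimate on the aggregate quantity `A` appearing in the explicit
solution of the `i`-deviated drift system: `|A| ≤ (2/N) ∑_j |b^j|`. -/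
theorem deviated_drift_aggregate_bound
    (N : ℕ) (hN : 2 ≤ N) (i : Fin N) (π β b : Fin N → ℝ)
    (hπ : ∀ j, π j ∈ Set.Icc (0 : ℝ) 1)
    (hβ : ∀ j, β j ∈ Set.Icc (0 : ℝ) 1) :
    let r : Fin N → ℝ := fun j => 1 + (((N : ℝ) - 1) / N) * π j
    let a : Fin N → ℝ := fun j =>
      (π j + β j * π i / ((N : ℝ) * r i)) / (r j + β j / (N : ℝ))
    let A : ℝ :=
      ((1 / (N : ℝ)) * ∑ j ∈ Finset.univ.erase i,
          a j * (b j + (π i / ((N : ℝ) * r i)) * b i)) /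
        (1 - (1 / (N : ℝ)) * ∑ j ∈ Finset.univ.erase i, a j)
    |A| ≤ (2 / (N : ℝ)) * ∑ j, |b j| := by
  intro r a A
  have hrdef : ∀ j, r j = 1 + (((N : ℝ) - 1) / N) * π j := fun _ => rfl
  have hadef : ∀ j, a j =
      (π j + β j * π i / ((N : ℝ) * r i)) / (r j + β j / (N : ℝ)) := fun _ => rfl
  have hAdef : A = ((1 / (N : ℝ)) * ∑ j ∈ Finset.univ.erase i,
          a j * (b j + (π i / ((N : ℝ) * r i)) * b i)) /
        (1 - (1 / (N : ℝ)) * ∑ j ∈ Finset.univ.erase i, a j) := rfl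
  clear_value A
  clear_value a
  clear_value r
  set n : ℝ := (N:ℝ) with hn_def
  clear_value n
  have hn2 : (2:ℝ) ≤ n := by rw [hn_def]; exact_mod_cast hN
  have hn0 : (0:ℝ) < n := by linarith
  have h2n : (0:ℝ) < 2*n - 1 := by linarith
  -- r bounds
  have hr1 : ∀ j, 1 ≤ r j := by
    intro j
    have h1 := (hπ j).1
    have h : 0 ≤ ((n-1)/n) * π j :=
      mul_nonneg (div_nonneg (by linarith) hn0.le) h1
    rw [hrdef j]; linarith
  have hnr : ∀ j, n * r j = n + (n-1) * π j := by
    intro j; rw [hrdef j]; field_simp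
  set c : ℝ := π i / (n * r i) with hc_def
  clear_value c
  have hri : (0:ℝ) < n * r i := by nlinarith [hr1 i]
  have hc0 : 0 ≤ c := hc_def ▸ div_nonneg (hπ i).1 hri.le
  have hc1 : (2*n-1) * c ≤ 1 := by
    rw [hc_def, ← mul_div_assoc, div_le_one hri, hnr i]
    nlinarith [(hπ i).2, (hπ i).1]
  -- denominators positive
  have hd : ∀ j, 0 < r j + β j / n := by
    intro j
    have h1 : 0 ≤ β j / n := div_nonneg (hβ j).1 hn0.le
    linarith [hr1 j]
  have hdn : ∀ j, n * (r j + β j / n) = n + (n-1) * π j + β j := by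
    intro j
    rw [mul_add, hnr j]
    field_simp
  have ha0 : ∀ j, 0 ≤ a j := by
    intro j
    rw [hadef j]
    apply div_nonneg _ (hd j).le
    have h1 : 0 ≤ β j * π i / (n * r i) :=
      div_nonneg (mul_nonneg (hβ j).1 (hπ i).1) hri.le
    linarith [(hπ j).1]
  set M : ℝ := n / (2*n - 1) with hM_def
  clear_value M
  have hM0 : 0 < M := by rw [hM_def]; positivity
  have haM : ∀ j, a j ≤ M := by
    intro j
    have hβc : β j * π i / (n * r i) = β j * c := by
      rw [hc_def]; ring
    rw [hadef j, hβc, hM_def, div_le_div_iff₀ (hd j) h2n]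
    have hb0 := (hβ j).1
    have hp0 := (hπ j).1
    have hp1 := (hπ j).2
    have key : β j * ((2*n-1)*c) ≤ β j * 1 := mul_le_mul_of_nonneg_left hc1 hb0
    nlinarith [hdn j, mul_le_mul_of_nonneg_left hp1 hn0.le]
  -- sum bounds
  have hcard : ((Finset.univ.erase i).card : ℝ) = n - 1 := by
    rw [Finset.card_erase_of_mem (Finset.mem_univ i)]
    simp only [Finset.card_univ, Fintype.card_fin]
    rw [hn_def, Nat.cast_sub (by omega)]
    norm_num
  have hS : ∑ j ∈ Finset.univ.erase i, a j ≤ (n-1) * M := by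
    calc ∑ j ∈ Finset.univ.erase i, a j
        ≤ ∑ _j ∈ Finset.univ.erase i, M := Finset.sum_le_sum (fun j _ => haM j)
      _ = (n-1) * M := by rw [Finset.sum_const, nsmul_eq_mul, hcard]
  have hS0 : 0 ≤ ∑ j ∈ Finset.univ.erase i, a j :=
    Finset.sum_nonneg (fun j _ => ha0 j)
  -- denominator of A
  have hMeq : 1 - (1/n) * ((n-1) * M) = M := by
    rw [hM_def]; field_simp [(by linarith : (0:ℝ) < n*2-1).ne']; ring
  have hD : M ≤ 1 - (1/n) * ∑ j ∈ Finset.univ.erase i, a j := by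
    have h1 : (1/n) * ∑ j ∈ Finset.univ.erase i, a j ≤ (1/n) * ((n-1) * M) :=
      mul_le_mul_of_nonneg_left hS (by positivity)
    linarith
  have hDpos : 0 < 1 - (1/n) * ∑ j ∈ Finset.univ.erase i, a j :=
    lt_of_lt_of_le hM0 hD
  -- numerator bound
  set T : ℝ := ∑ j, |b j| with hT_def
  clear_value T
  have hT0 : 0 ≤ T := hT_def ▸ Finset.sum_nonneg (fun j _ => abs_nonneg _)
  have hNum : |∑ j ∈ Finset.univ.erase i, a j * (b j + c * b i)| ≤ M * T := by
    calc |∑ j ∈ Finset.univ.erase i, a j * (b j + c * b i)|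
        ≤ ∑ j ∈ Finset.univ.erase i, |a j * (b j + c * b i)| :=
          Finset.abs_sum_le_sum_abs _ _
      _ ≤ ∑ j ∈ Finset.univ.erase i, M * (|b j| + c * |b i|) := by
          apply Finset.sum_le_sum
          intro j _
          rw [abs_mul, abs_of_nonneg (ha0 j)]
          have h1 : |b j + c * b i| ≤ |b j| + c * |b i| := by
            calc |b j + c * b i| ≤ |b j| + |c * b i| := abs_add_le _ _
              _ = |b j| + c * |b i| := by rw [abs_mul, abs_of_nonneg hc0]
          have h2 : 0 ≤ |b j| + c * |b i| :=
            add_nonneg (abs_nonneg _) (mul_nonneg hc0 (abs_nonneg _))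
          calc a j * |b j + c * b i| ≤ a j * (|b j| + c * |b i|) :=
                mul_le_mul_of_nonneg_left h1 (ha0 j)
            _ ≤ M * (|b j| + c * |b i|) :=
                mul_le_mul_of_nonneg_right (haM j) h2
      _ = M * ((∑ j ∈ Finset.univ.erase i, |b j|) + (n-1) * (c * |b i|)) := by
          rw [← Finset.mul_sum, Finset.sum_add_distrib, Finset.sum_const,
            nsmul_eq_mul, hcard]
      _ ≤ M * T := by
          apply mul_le_mul_of_nonneg_left _ hM0.le
          have h1 : (n-1) * (c * |b i|) ≤ |b i| := by
            have h2 : (n-1) * c ≤ 1 := by nlinarith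
            nlinarith [abs_nonneg (b i),
              mul_nonneg (by linarith : (0:ℝ) ≤ n - 1) hc0]
          have h3 : (∑ j ∈ Finset.univ.erase i, |b j|) + |b i| = T := by
            rw [hT_def, add_comm]
            exact Finset.add_sum_erase Finset.univ (fun j => |b j|) (Finset.mem_univ i)
          linarith
  -- combine
  rw [hAdef]
  rw [abs_div, abs_of_pos hDpos, div_le_iff₀ hDpos, abs_mul,
    abs_of_nonneg (by positivity : (0:ℝ) ≤ 1/n)]
  have h4 : (1/n) * |∑ j ∈ Finset.univ.erase i, a j * (b j + c * b i)| ≤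
      (1/n) * (M * T) := mul_le_mul_of_nonneg_left hNum (by positivity)
  have h5 : (1/n) * (M * T) ≤ (2/n) * T * M := by
    have h7 : 0 ≤ (1/n) * (M * T) := by positivity
    have h8 : (2/n) * T * M = (1/n) * (M * T) + (1/n) * (M * T) := by ring
    linarith
  have h6 : (2/n) * T * M ≤ (2/n) * T *
      (1 - (1/n) * ∑ j ∈ Finset.univ.erase i, a j) :=
    mul_le_mul_of_nonneg_left hD (by positivity)
  linarith
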